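/- Any Roesser realization of a 2-D convolutional layer whose leading kernel coefficient K[r₁,r₂] has full column rank c_in, with c_in = c_out, has total state dimension at least (r₁+r₂)·c_in. -/

import Mathlib

open Matrix

open Finset



lemma helperFin {n : ℕ} (N : ℕ) (f : Fin n → ℝ) :
    (∑ x : Fin n, if (x : ℕ) = N then f x else 0) = if h : N < n then f ⟨N, h⟩ else 0 := by
  split_ifs with h
  · rw [Finset.sum_eq_single ⟨N, h⟩]
    · simp
    · intro b _ hb
      rw [if_neg]
      intro hbN
      exact hb (Fin.ext hbN)
    · simp
  · apply Finset.sum_eq_zero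
    intro b _
    rw [if_neg]
    intro hbN
    exact h (hbN ▸ b.isLt)


variable {c n₁ n₂ : ℕ}

def Phi (A₁₁ : Matrix (Fin n₁) (Fin n₁) ℝ) (A₁₂ : Matrix (Fin n₁) (Fin n₂) ℝ)
    (A₂₁ : Matrix (Fin n₂) (Fin n₁) ℝ) (A₂₂ : Matrix (Fin n₂) (Fin n₂) ℝ) (N : ℕ) :
    ℕ → ℕ → Matrix (Fin n₁) (Fin N × (Fin n₁ ⊕ Fin n₂)) ℝ ×
      Matrix (Fin n₂) (Fin N × (Fin n₁ ⊕ Fin n₂)) ℝ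
  | 0, i₁ => (Matrix.of fun s q => if (q.1 : ℕ) = i₁ ∧ q.2 = Sum.inl s then 1 else 0,
      Matrix.of fun s q => if (q.1 : ℕ) = i₁ ∧ q.2 = Sum.inr s then 1 else 0)
  | (ℓ+1), i₁ =>
      ((if i₁ = 0 then 0 else
        A₁₁ * (Phi A₁₁ A₁₂ A₂₁ A₂₂ N ℓ (i₁-1)).1 + A₁₂ * (Phi A₁₁ A₁₂ A₂₁ A₂₂ N ℓ (i₁-1)).2),
       A₂₁ * (Phi A₁₁ A₁₂ A₂₁ A₂₂ N ℓ i₁).1 + A₂₂ * (Phi A₁₁ A₁₂ A₂₁ A₂₂ N ℓ i₁).2)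

def uv (L m d₀ : ℕ) (v : Fin L × Fin m × Fin c → ℝ) : ℕ → ℕ → Fin c → ℝ :=
  fun i₁ i₂ k => if h : i₁ < m ∧ i₁ + i₂ ≤ d₀ ∧ d₀ < i₁ + i₂ + L
    then v (⟨d₀ - (i₁ + i₂), by omega⟩, ⟨i₁, h.1⟩, k) else 0

def Mconv (r₁ r₂ : ℕ) (K : ℕ → ℕ → Matrix (Fin c) (Fin c) ℝ) (L m : ℕ) :
    Matrix (Fin L × Fin m × Fin c) (Fin L × Fin m × Fin c) ℝ :=
  Matrix.of fun p q =>
    ∑ t₁ ∈ Finset.range (r₁+1), ∑ t₂ ∈ Finset.range (r₂+1),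
      if (r₁ + (p.2.1 : ℕ) = t₁ + (q.2.1 : ℕ) ∧ t₁ + t₂ = (p.1 : ℕ) + (q.1 : ℕ) + 1)
      then K t₁ t₂ p.2.2 q.2.2 else 0

lemma Mconv_eq_zero (r₁ r₂ : ℕ) (K : ℕ → ℕ → Matrix (Fin c) (Fin c) ℝ) (L m : ℕ)
    (hL : L = r₁ + r₂) (p q : Fin L × Fin m × Fin c) (hpq : L ≤ (p.1 : ℕ) + (q.1 : ℕ)) :
    Mconv r₁ r₂ K L m p q = 0 := by
  unfold Mconv
  rw [Matrix.of_apply]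
  apply Finset.sum_eq_zero
  intro t₁ ht₁
  apply Finset.sum_eq_zero
  intro t₂ ht₂
  rw [Finset.mem_range] at ht₁ ht₂
  rw [if_neg]
  omega

lemma Mconv_antidiag (r₁ r₂ : ℕ) (K : ℕ → ℕ → Matrix (Fin c) (Fin c) ℝ) (L m : ℕ)
    (hL : L = r₁ + r₂) (p q : Fin L × Fin m × Fin c) (hpq : (p.1 : ℕ) + (q.1 : ℕ) + 1 = L) :
    Mconv r₁ r₂ K L m p q = if p.2.1 = q.2.1 then K r₁ r₂ p.2.2 q.2.2 else 0 := by
  unfold Mconv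
  rw [Matrix.of_apply, Finset.sum_eq_single r₁]
  · rw [Finset.sum_eq_single r₂]
    · split_ifs with h1 h2 h2
      · rfl
      · exact absurd (Fin.ext (by omega)) h2
      · exact absurd (by omega : r₁ + (p.2.1 : ℕ) = r₁ + (q.2.1 : ℕ)) (by
          intro hh; exact h1 ⟨hh, by omega⟩)
      · rfl
    · intro t₂ ht₂ hne
      rw [Finset.mem_range] at ht₂
      rw [if_neg]; omega
    · intro h; exact absurd (Finset.self_mem_range_succ r₂) h
  · intro t₁ ht₁ hne
    rw [Finset.mem_range] at ht₁
    apply Finset.sum_eq_zero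
    intro t₂ ht₂
    rw [Finset.mem_range] at ht₂
    rw [if_neg]; omega
  · intro h; exact absurd (Finset.self_mem_range_succ r₁) h

lemma Mconv_ker (r₁ r₂ : ℕ) (K : ℕ → ℕ → Matrix (Fin c) (Fin c) ℝ) (L m : ℕ)
    (hL : L = r₁ + r₂) (hK : IsUnit (K r₁ r₂)) (v : Fin L × Fin m × Fin c → ℝ)
    (h : (Mconv r₁ r₂ K L m).mulVec v = 0) : v = 0 := by
  have main : ∀ jn : ℕ, ∀ (hj : jn < L) (b : Fin m) (k' : Fin c), v (⟨jn, hj⟩, b, k') = 0 := by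
    intro jn
    induction jn using Nat.strong_induction_on with
    | _ jn IH =>
      intro hj b
      set i : Fin L := ⟨L - 1 - jn, by omega⟩ with hi
      have hrow : ∀ k : Fin c,
          ∑ k'' : Fin c, K r₁ r₂ k k'' * v (⟨jn, hj⟩, b, k'') = 0 := by
        intro k
        have h0 : ((Mconv r₁ r₂ K L m).mulVec v) (i, b, k) = 0 := by rw [h]; rfl
        rw [Matrix.mulVec, dotProduct, Fintype.sum_prod_type] at h0
        rw [← h0]
        symm
        rw [Finset.sum_eq_single (⟨jn, hj⟩ : Fin L)]
        · rw [Fintype.sum_prod_type, Finset.sum_eq_single b]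
          · apply Finset.sum_congr rfl
            intro k'' _
            rw [Mconv_antidiag r₁ r₂ K L m hL _ _ (by simp [hi]; omega), if_pos rfl]
          · intro b' _ hb'
            apply Finset.sum_eq_zero
            intro k'' _
            rw [Mconv_antidiag r₁ r₂ K L m hL _ _ (by simp [hi]; omega), if_neg, zero_mul]
            exact fun hh => hb' hh.symm
          · intro hb; exact absurd (Finset.mem_univ b) hb
        · intro j' _ hj'
          rcases lt_or_gt_of_ne (fun hh : (j' : ℕ) = jn => hj' (Fin.ext hh)) with hlt | hgt
          · apply Finset.sum_eq_zero
            rintro ⟨b1, b2⟩ _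
            have hv : v (j', b1, b2) = 0 := IH _ hlt j'.isLt b1 b2
            rw [hv, mul_zero]
          · apply Finset.sum_eq_zero
            rintro ⟨b1, b2⟩ _
            rw [Mconv_eq_zero r₁ r₂ K L m hL _ _ (by simp [hi]; omega), zero_mul]
        · intro hb; exact absurd (Finset.mem_univ _) hb
      have hinj := Matrix.mulVec_injective_iff_isUnit.mpr hK
      have : (K r₁ r₂).mulVec (fun k'' => v (⟨jn, hj⟩, b, k'')) = 0 := by
        funext k
        simpa [Matrix.mulVec, dotProduct] using hrow k
      have hz := hinj (a₁ := fun k'' => v (⟨jn, hj⟩, b, k'')) (a₂ := 0)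
        (by simpa [Matrix.mulVec_zero] using this)
      intro k'
      exact congrFun hz k'
  funext q
  obtain ⟨⟨jn, hj⟩, b, k'⟩ := q
  exact main jn hj b k'

section
variable {c n₁ n₂ : ℕ}
lemma perterm (r₁ r₂ L m d₀ : ℕ) (hL : L = r₁ + r₂) (hd : d₀ = L + m)
    (K : ℕ → ℕ → Matrix (Fin c) (Fin c) ℝ) (v : Fin L × Fin m × Fin c → ℝ)
    (i : Fin L) (a : Fin m) (k : Fin c) (t₁ t₂ : ℕ) (ht₁ : t₁ ≤ r₁) (ht₂ : t₂ ≤ r₂) :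
    (if t₁ ≤ r₁ + (a : ℕ) ∧ t₂ ≤ d₀ + 1 + (i : ℕ) - (r₁ + (a : ℕ)) then
      (K t₁ t₂).mulVec
        (uv L m d₀ v (r₁ + (a : ℕ) - t₁) (d₀ + 1 + (i : ℕ) - (r₁ + (a : ℕ)) - t₂)) k else 0)
    = ∑ j' : Fin L, ∑ b' : Fin m, ∑ k' : Fin c,
        (if (r₁ + (a : ℕ) = t₁ + (b' : ℕ) ∧ t₁ + t₂ = (i : ℕ) + (j' : ℕ) + 1)
         then K t₁ t₂ k k' else 0) * v (j', b', k') := by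
  have ha : (a : ℕ) < m := a.isLt
  have hiL : (i : ℕ) < L := i.isLt
  rw [if_pos (by omega)]
  by_cases hc1 : (i : ℕ) + 1 ≤ t₁ + t₂
  · -- relevant case
    have hstep : ∀ j' : Fin L,
        (∑ b' : Fin m, ∑ k' : Fin c,
          (if (r₁ + (a : ℕ) = t₁ + (b' : ℕ) ∧ t₁ + t₂ = (i : ℕ) + (j' : ℕ) + 1)
           then K t₁ t₂ k k' else 0) * v (j', b', k'))
        = if (j' : ℕ) = t₁ + t₂ - 1 - (i : ℕ) then
            (∑ b' : Fin m, if (b' : ℕ) = r₁ + (a : ℕ) - t₁ then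
              (∑ k' : Fin c, K t₁ t₂ k k' * v (j', b', k')) else 0) else 0 := by
      intro j'
      by_cases hj' : (j' : ℕ) = t₁ + t₂ - 1 - (i : ℕ)
      · rw [if_pos hj']
        apply Finset.sum_congr rfl
        intro b' _
        by_cases hb' : (b' : ℕ) = r₁ + (a : ℕ) - t₁
        · rw [if_pos hb']
          apply Finset.sum_congr rfl
          intro k' _
          rw [if_pos (by omega)]
        · rw [if_neg hb']
          exact Finset.sum_eq_zero fun k' _ => by rw [if_neg (by omega), zero_mul]
      · rw [if_neg hj']
        apply Finset.sum_eq_zero; intro b' _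
        exact Finset.sum_eq_zero fun k' _ => by rw [if_neg (by omega), zero_mul]
    rw [Finset.sum_congr rfl fun j' _ => hstep j', helperFin, dif_pos (by omega : t₁ + t₂ - 1 - (i : ℕ) < L)]
    rw [helperFin]
    by_cases hB : r₁ + (a : ℕ) - t₁ < m
    · rw [dif_pos hB]
      rw [Matrix.mulVec, dotProduct]
      apply Finset.sum_congr rfl
      intro k' _
      congr 1
      unfold uv
      rw [dif_pos (by omega)]
      apply congrArg
      refine Prod.ext ?_ (Prod.ext ?_ rfl) <;> simp only [Fin.mk.injEq] <;> omega
    · rw [dif_neg hB]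
      rw [Matrix.mulVec, dotProduct]
      apply Finset.sum_eq_zero
      intro k' _
      unfold uv
      rw [dif_neg (by omega), mul_zero]
  · -- lag too small: both sides zero
    symm
    rw [Matrix.mulVec, dotProduct]
    calc (∑ j' : Fin L, ∑ b' : Fin m, ∑ k' : Fin c,
        (if (r₁ + (a : ℕ) = t₁ + (b' : ℕ) ∧ t₁ + t₂ = (i : ℕ) + (j' : ℕ) + 1)
         then K t₁ t₂ k k' else 0) * v (j', b', k')) = 0 := by
          apply Finset.sum_eq_zero; intro j' _
          apply Finset.sum_eq_zero; intro b' _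
          exact Finset.sum_eq_zero fun k' _ => by rw [if_neg (by omega), zero_mul]
      _ = ∑ k' : Fin c, K t₁ t₂ k k' *
            uv L m d₀ v (r₁ + (a : ℕ) - t₁) (d₀ + 1 + (i : ℕ) - (r₁ + (a : ℕ)) - t₂) k' := by
          symm
          apply Finset.sum_eq_zero
          intro k' _
          unfold uv
          rw [dif_neg (by omega), mul_zero]

lemma phi_spec (r₁ r₂ L m d₀ : ℕ) (hL : L = r₁ + r₂) (hd : d₀ = L + m)
    (A₁₁ : Matrix (Fin n₁) (Fin n₁) ℝ) (A₁₂ : Matrix (Fin n₁) (Fin n₂) ℝ)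
    (A₂₁ : Matrix (Fin n₂) (Fin n₁) ℝ) (A₂₂ : Matrix (Fin n₂) (Fin n₂) ℝ)
    (B₁ : Matrix (Fin n₁) (Fin c) ℝ) (B₂ : Matrix (Fin n₂) (Fin c) ℝ)
    (u : ℕ → ℕ → Fin c → ℝ) (hu : ∀ i₁ i₂, d₀ < i₁ + i₂ → u i₁ i₂ = 0)
    (x₁ : ℕ → ℕ → Fin n₁ → ℝ) (x₂ : ℕ → ℕ → Fin n₂ → ℝ)
    (hx₁0 : ∀ i₂, x₁ 0 i₂ = 0)
    (hrec₁ : ∀ i₁ i₂, x₁ (i₁ + 1) i₂ =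
      A₁₁.mulVec (x₁ i₁ i₂) + A₁₂.mulVec (x₂ i₁ i₂) + B₁.mulVec (u i₁ i₂))
    (hrec₂ : ∀ i₁ i₂, x₂ i₁ (i₂ + 1) =
      A₂₁.mulVec (x₁ i₁ i₂) + A₂₂.mulVec (x₂ i₁ i₂) + B₂.mulVec (u i₁ i₂)) :
    ∀ ℓ i₁, i₁ < m + r₁ → ∀ i₂, i₁ + i₂ = d₀ + 1 + ℓ →
      x₁ i₁ i₂ = (Phi A₁₁ A₁₂ A₂₁ A₂₂ (m + r₁) ℓ i₁).1.mulVec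
          (fun q => Sum.elim (fun s => x₁ (q.1 : ℕ) (d₀ + 1 - (q.1 : ℕ)) s)
            (fun s => x₂ (q.1 : ℕ) (d₀ + 1 - (q.1 : ℕ)) s) q.2) ∧
      x₂ i₁ i₂ = (Phi A₁₁ A₁₂ A₂₁ A₂₂ (m + r₁) ℓ i₁).2.mulVec
          (fun q => Sum.elim (fun s => x₁ (q.1 : ℕ) (d₀ + 1 - (q.1 : ℕ)) s)
            (fun s => x₂ (q.1 : ℕ) (d₀ + 1 - (q.1 : ℕ)) s) q.2) := by
  set ξ : Fin (m + r₁) × (Fin n₁ ⊕ Fin n₂) → ℝ :=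
    fun q => Sum.elim (fun s => x₁ (q.1 : ℕ) (d₀ + 1 - (q.1 : ℕ)) s)
      (fun s => x₂ (q.1 : ℕ) (d₀ + 1 - (q.1 : ℕ)) s) q.2 with hξ
  intro ℓ
  induction ℓ with
  | zero =>
    intro i₁ hi₁ i₂ hi₂
    have hi₂' : i₂ = d₀ + 1 - i₁ := by omega
    subst hi₂'
    constructor
    · funext s
      rw [Matrix.mulVec, dotProduct, Finset.sum_eq_single (⟨i₁, hi₁⟩, Sum.inl s)]
      · rw [Phi]
        simp [hξ]
      · rintro ⟨p, ss⟩ _ hne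
        show (Phi A₁₁ A₁₂ A₂₁ A₂₂ (m + r₁) 0 i₁).1 s _ * ξ _ = 0
        rw [Phi]
        simp only [Matrix.of_apply]
        rw [if_neg, zero_mul]
        rintro ⟨h1, h2⟩
        exact hne (Prod.ext (Fin.ext h1) h2)
      · intro hmem; exact absurd (Finset.mem_univ _) hmem
    · funext s
      rw [Matrix.mulVec, dotProduct, Finset.sum_eq_single (⟨i₁, hi₁⟩, Sum.inr s)]
      · rw [Phi]
        simp [hξ]
      · rintro ⟨p, ss⟩ _ hne
        show (Phi A₁₁ A₁₂ A₂₁ A₂₂ (m + r₁) 0 i₁).2 s _ * ξ _ = 0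
        rw [Phi]
        simp only [Matrix.of_apply]
        rw [if_neg, zero_mul]
        rintro ⟨h1, h2⟩
        exact hne (Prod.ext (Fin.ext h1) h2)
      · intro hmem; exact absurd (Finset.mem_univ _) hmem
  | succ ℓ IH =>
    intro i₁ hi₁ i₂ hi₂
    constructor
    · -- x₁ component
      match i₁, hi₁, hi₂ with
      | 0, hi₁, hi₂ =>
        rw [hx₁0]
        show (0 : Fin n₁ → ℝ) = (Phi A₁₁ A₁₂ A₂₁ A₂₂ (m+r₁) (ℓ+1) 0).1.mulVec ξ
        rw [Phi]
        simp
      | (i₁' + 1), hi₁, hi₂ =>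
        have hu' : u i₁' i₂ = 0 := hu _ _ (by omega)
        obtain ⟨h1, h2⟩ := IH i₁' (by omega) i₂ (by omega)
        rw [hrec₁ i₁' i₂, hu', h1, h2]
        show _ = (Phi A₁₁ A₁₂ A₂₁ A₂₂ (m+r₁) (ℓ+1) (i₁'+1)).1.mulVec ξ
        rw [Phi]
        simp only [Nat.succ_ne_zero, if_false, Nat.add_sub_cancel]
        rw [Matrix.add_mulVec, Matrix.mulVec_zero, ← Matrix.mulVec_mulVec, ← Matrix.mulVec_mulVec]
        abel
    · -- x₂ component
      have hi₂pos : 1 ≤ i₂ := by omega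
      obtain ⟨i₂', rfl⟩ : ∃ i₂', i₂ = i₂' + 1 := ⟨i₂ - 1, by omega⟩
      have hu' : u i₁ i₂' = 0 := hu _ _ (by omega)
      obtain ⟨h1, h2⟩ := IH i₁ hi₁ i₂' (by omega)
      rw [hrec₂ i₁ i₂', hu', h1, h2]
      show _ = (Phi A₁₁ A₁₂ A₂₁ A₂₂ (m+r₁) (ℓ+1) i₁).2.mulVec ξ
      rw [Phi]
      rw [Matrix.add_mulVec, Matrix.mulVec_zero, ← Matrix.mulVec_mulVec, ← Matrix.mulVec_mulVec]
      abel



lemma conv_eq_mul (r₁ r₂ L m d₀ : ℕ) (hL : L = r₁ + r₂) (hd : d₀ = L + m)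
    (K : ℕ → ℕ → Matrix (Fin c) (Fin c) ℝ) (v : Fin L × Fin m × Fin c → ℝ)
    (i : Fin L) (a : Fin m) (k : Fin c) :
    (∑ t₁ ∈ Finset.range (r₁ + 1), ∑ t₂ ∈ Finset.range (r₂ + 1),
      if t₁ ≤ r₁ + (a : ℕ) ∧ t₂ ≤ d₀ + 1 + (i : ℕ) - (r₁ + (a : ℕ)) then
        (K t₁ t₂).mulVec
          (uv L m d₀ v (r₁ + (a : ℕ) - t₁) (d₀ + 1 + (i : ℕ) - (r₁ + (a : ℕ)) - t₂)) k
      else 0)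
    = (Mconv r₁ r₂ K L m).mulVec v (i, a, k) := by
  rw [Matrix.mulVec, dotProduct]
  simp only [Mconv, Matrix.of_apply, Finset.sum_mul]
  conv_rhs => rw [Finset.sum_comm]
  apply Finset.sum_congr rfl
  intro t₁ ht₁
  rw [Finset.sum_comm]
  apply Finset.sum_congr rfl
  intro t₂ ht₂
  rw [Finset.mem_range] at ht₁ ht₂
  simp only [Fintype.sum_prod_type]
  exact perterm r₁ r₂ L m d₀ hL hd K v i a k t₁ t₂ (by omega) (by omega)

lemma key (r₁ r₂ : ℕ)
    (K : ℕ → ℕ → Matrix (Fin c) (Fin c) ℝ)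
    (hK : IsUnit (K r₁ r₂))
    (A₁₁ : Matrix (Fin n₁) (Fin n₁) ℝ) (A₁₂ : Matrix (Fin n₁) (Fin n₂) ℝ)
    (A₂₁ : Matrix (Fin n₂) (Fin n₁) ℝ) (A₂₂ : Matrix (Fin n₂) (Fin n₂) ℝ)
    (B₁ : Matrix (Fin n₁) (Fin c) ℝ) (B₂ : Matrix (Fin n₂) (Fin c) ℝ)
    (C₁ : Matrix (Fin c) (Fin n₁) ℝ) (C₂ : Matrix (Fin c) (Fin n₂) ℝ)
    (D : Matrix (Fin c) (Fin c) ℝ)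
    (hreal : ∀ u : ℕ → ℕ → Fin c → ℝ,
      ∃ x₁ : ℕ → ℕ → Fin n₁ → ℝ, ∃ x₂ : ℕ → ℕ → Fin n₂ → ℝ,
        (∀ i₂, x₁ 0 i₂ = 0) ∧ (∀ i₁, x₂ i₁ 0 = 0) ∧
        (∀ i₁ i₂, x₁ (i₁ + 1) i₂ =
          A₁₁.mulVec (x₁ i₁ i₂) + A₁₂.mulVec (x₂ i₁ i₂) + B₁.mulVec (u i₁ i₂)) ∧
        (∀ i₁ i₂, x₂ i₁ (i₂ + 1) =
          A₂₁.mulVec (x₁ i₁ i₂) + A₂₂.mulVec (x₂ i₁ i₂) + B₂.mulVec (u i₁ i₂)) ∧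
        (∀ i₁ i₂, C₁.mulVec (x₁ i₁ i₂) + C₂.mulVec (x₂ i₁ i₂) + D.mulVec (u i₁ i₂) =
          ∑ t₁ ∈ Finset.range (r₁ + 1), ∑ t₂ ∈ Finset.range (r₂ + 1),
            if t₁ ≤ i₁ ∧ t₂ ≤ i₂ then (K t₁ t₂).mulVec (u (i₁ - t₁) (i₂ - t₂)) else 0))
    (m : ℕ) : (r₁ + r₂) * m * c ≤ (m + r₁) * (n₁ + n₂) := by
  set L := r₁ + r₂ with hL
  set d₀ := L + m with hd
  set Θ : Matrix (Fin L × Fin m × Fin c) (Fin (m + r₁) × (Fin n₁ ⊕ Fin n₂)) ℝ :=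
    Matrix.of fun p q =>
      (C₁ * (Phi A₁₁ A₁₂ A₂₁ A₂₂ (m + r₁) (p.1 : ℕ) (r₁ + (p.2.1 : ℕ))).1
        + C₂ * (Phi A₁₁ A₁₂ A₂₁ A₂₂ (m + r₁) (p.1 : ℕ) (r₁ + (p.2.1 : ℕ))).2) p.2.2 q
    with hΘ
  have step1 : ∀ v : Fin L × Fin m × Fin c → ℝ,
      ∃ ξ : Fin (m + r₁) × (Fin n₁ ⊕ Fin n₂) → ℝ,
        (Mconv r₁ r₂ K L m).mulVec v = Θ.mulVec ξ := by
    intro v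
    obtain ⟨x₁, x₂, hx₁0, hx₂0, hrec₁, hrec₂, hout⟩ := hreal (uv L m d₀ v)
    have hu0 : ∀ i₁ i₂, d₀ < i₁ + i₂ → uv L m d₀ v i₁ i₂ = 0 := by
      intro i₁ i₂ h
      funext k
      exact dif_neg (by omega)
    refine ⟨fun q => Sum.elim (fun s => x₁ (q.1 : ℕ) (d₀ + 1 - (q.1 : ℕ)) s)
      (fun s => x₂ (q.1 : ℕ) (d₀ + 1 - (q.1 : ℕ)) s) q.2, ?_⟩
    funext p
    obtain ⟨i, a, k⟩ := p
    have ha : (a : ℕ) < m := a.isLt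
    have hi : (i : ℕ) < L := i.isLt
    set o₁ := r₁ + (a : ℕ) with ho₁
    set o₂ := d₀ + 1 + (i : ℕ) - (r₁ + (a : ℕ)) with ho₂
    have hspec := phi_spec r₁ r₂ L m d₀ hL hd A₁₁ A₁₂ A₂₁ A₂₂ B₁ B₂ _ hu0 x₁ x₂ hx₁0
      hrec₁ hrec₂ (i : ℕ) o₁ (by omega) o₂ (by omega)
    have houtk := congrFun (hout o₁ o₂) k
    rw [← conv_eq_mul r₁ r₂ L m d₀ hL hd K v i a k]
    have hDu : uv L m d₀ v o₁ o₂ = 0 := hu0 _ _ (by omega)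
    rw [show ∀ X : ℝ, ((∑ t₁ ∈ Finset.range (r₁ + 1), ∑ t₂ ∈ Finset.range (r₂ + 1),
        if t₁ ≤ o₁ ∧ t₂ ≤ o₂ then
          (K t₁ t₂).mulVec (uv L m d₀ v (o₁ - t₁) (o₂ - t₂)) k else 0) = X) =
        ((∑ t₁ ∈ Finset.range (r₁ + 1), ∑ t₂ ∈ Finset.range (r₂ + 1),
        if t₁ ≤ o₁ ∧ t₂ ≤ o₂ then
          (K t₁ t₂).mulVec (uv L m d₀ v (o₁ - t₁) (o₂ - t₂)) else 0) k = X)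
      from fun X => by simp [Finset.sum_apply, apply_ite (fun f : Fin c → ℝ => f k)]]
    rw [← houtk]
    rw [hspec.1, hspec.2, hDu]
    simp only [Matrix.mulVec_zero, Pi.add_apply, Pi.zero_apply, add_zero]
    rw [Matrix.mulVec_mulVec, Matrix.mulVec_mulVec]
    rw [hΘ]
    show _ = ((C₁ * (Phi A₁₁ A₁₂ A₂₁ A₂₂ (m + r₁) (i : ℕ) o₁).1 + C₂ * (Phi A₁₁ A₁₂ A₂₁ A₂₂ (m + r₁) (i : ℕ) o₁).2).mulVec _) k
    rw [Matrix.add_mulVec]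
    rfl
  -- linear algebra
  have hinj : Function.Injective (Mconv r₁ r₂ K L m (c := c)).mulVecLin := by
    rw [injective_iff_map_eq_zero]
    intro v hv
    exact Mconv_ker r₁ r₂ K L m hL hK v hv
  have hrange : LinearMap.range (Mconv r₁ r₂ K L m (c := c)).mulVecLin ≤
      LinearMap.range Θ.mulVecLin := by
    rintro y ⟨v, rfl⟩
    obtain ⟨ξ, hξ⟩ := step1 v
    exact ⟨ξ, by rw [Matrix.mulVecLin_apply, Matrix.mulVecLin_apply, hξ]⟩
  calc (r₁ + r₂) * m * c = Fintype.card (Fin L × Fin m × Fin c) := by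
        simp [Fintype.card_prod, hL, mul_assoc]
    _ = Module.finrank ℝ ((Fin L × Fin m × Fin c) → ℝ) :=
        (Module.finrank_fintype_fun_eq_card ℝ).symm
    _ = Module.finrank ℝ (LinearMap.range (Mconv r₁ r₂ K L m (c := c)).mulVecLin) :=
        (LinearMap.finrank_range_of_inj hinj).symm
    _ ≤ Module.finrank ℝ (LinearMap.range Θ.mulVecLin) := Submodule.finrank_mono hrange
    _ ≤ Module.finrank ℝ ((Fin (m + r₁) × (Fin n₁ ⊕ Fin n₂)) → ℝ) := by
        have := LinearMap.finrank_range_le Θ.mulVecLin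
        rwa [Module.finrank_fintype_fun_eq_card ℝ, ← Module.finrank_fintype_fun_eq_card ℝ] at this
    _ = Fintype.card (Fin (m + r₁) × (Fin n₁ ⊕ Fin n₂)) :=
        Module.finrank_fintype_fun_eq_card ℝ
    _ = (m + r₁) * (n₁ + n₂) := by simp [Fintype.card_prod, Fintype.card_sum]

end

/-- Any Roesser realization of a 2-D convolutional layer with c_in = c_out = c and
invertible leading kernel coefficient K[r₁,r₂] has state dimension ≥ (r₁+r₂)·c. -/
theorem stmt9 (c r₁ r₂ n₁ n₂ : ℕ) (hc : 0 < c) (hr₁ : 0 < r₁) (hr₂ : 0 < r₂)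
    (K : ℕ → ℕ → Matrix (Fin c) (Fin c) ℝ)
    (hK : IsUnit (K r₁ r₂))
    (A₁₁ : Matrix (Fin n₁) (Fin n₁) ℝ) (A₁₂ : Matrix (Fin n₁) (Fin n₂) ℝ)
    (A₂₁ : Matrix (Fin n₂) (Fin n₁) ℝ) (A₂₂ : Matrix (Fin n₂) (Fin n₂) ℝ)
    (B₁ : Matrix (Fin n₁) (Fin c) ℝ) (B₂ : Matrix (Fin n₂) (Fin c) ℝ)
    (C₁ : Matrix (Fin c) (Fin n₁) ℝ) (C₂ : Matrix (Fin c) (Fin n₂) ℝ)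
    (D : Matrix (Fin c) (Fin c) ℝ)
    (hreal : ∀ u : ℕ → ℕ → Fin c → ℝ,
      ∃ x₁ : ℕ → ℕ → Fin n₁ → ℝ, ∃ x₂ : ℕ → ℕ → Fin n₂ → ℝ,
        (∀ i₂, x₁ 0 i₂ = 0) ∧ (∀ i₁, x₂ i₁ 0 = 0) ∧
        (∀ i₁ i₂, x₁ (i₁ + 1) i₂ =
          A₁₁.mulVec (x₁ i₁ i₂) + A₁₂.mulVec (x₂ i₁ i₂) + B₁.mulVec (u i₁ i₂)) ∧
        (∀ i₁ i₂, x₂ i₁ (i₂ + 1) =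
          A₂₁.mulVec (x₁ i₁ i₂) + A₂₂.mulVec (x₂ i₁ i₂) + B₂.mulVec (u i₁ i₂)) ∧
        (∀ i₁ i₂, C₁.mulVec (x₁ i₁ i₂) + C₂.mulVec (x₂ i₁ i₂) + D.mulVec (u i₁ i₂) =
          ∑ t₁ ∈ Finset.range (r₁ + 1), ∑ t₂ ∈ Finset.range (r₂ + 1),
            if t₁ ≤ i₁ ∧ t₂ ≤ i₂ then (K t₁ t₂).mulVec (u (i₁ - t₁) (i₂ - t₂)) else 0)) :
    (r₁ + r₂) * c ≤ n₁ + n₂ := by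
  by_contra hcon
  push_neg at hcon
  set m := r₁ * (n₁ + n₂) + 1 with hm
  have hkey := key r₁ r₂ K hK A₁₁ A₁₂ A₂₁ A₂₂ B₁ B₂ C₁ C₂ D hreal m
  have h1 : m * (n₁ + n₂) + m ≤ m * (n₁ + n₂) + r₁ * (n₁ + n₂) := by
    calc m * (n₁ + n₂) + m = (n₁ + n₂ + 1) * m := by ring
      _ ≤ ((r₁ + r₂) * c) * m := Nat.mul_le_mul_right _ (by omega)
      _ = (r₁ + r₂) * m * c := by ring
      _ ≤ (m + r₁) * (n₁ + n₂) := hkey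
      _ = m * (n₁ + n₂) + r₁ * (n₁ + n₂) := by ring
  omega
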